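/- Let $p_1, \dots, p_u$ be pairwise distinct primes ($u \ge 1$) and $n_1, \dots, n_u$ positive integers, and suppose $p_1^{n_1} = \min_i p_i^{n_i}$. If $\frac{p_1^{n_1}-1}{p_1-1} + \sum_{i=2}^u \frac{p_i^{n_i+1}-p_i}{p_i-1} > \frac{1}{2}\prod_{i=1}^u p_i^{n_i} - 1$, then $u \le 2$. -/
import Mathlib

lemma claimC (S : Finset ℕ) (hc : 2 ≤ S.card) (h3 : ∀ x ∈ S, 3 ≤ x) :
    2 * ∑ x ∈ S, x + 2 ≤ ∏ x ∈ S, x + 2 * S.card := by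
  induction S using Finset.induction_on with
  | empty => simp at hc
  | @insert x s hx ih =>
    rw [Finset.card_insert_of_notMem hx] at hc ⊢
    rw [Finset.sum_insert hx, Finset.prod_insert hx]
    have hx3 : 3 ≤ x := h3 x (Finset.mem_insert_self x s)
    have h3' : ∀ y ∈ s, 3 ≤ y := fun y hy => h3 y (Finset.mem_insert_of_mem hy)
    rcases Nat.lt_or_ge s.card 2 with hlt | hge
    · have h1 : s.card = 1 := by omega
      obtain ⟨y, rfl⟩ := Finset.card_eq_one.mp h1
      have hy3 : 3 ≤ y := h3' y (Finset.mem_singleton_self y)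
      have hxy : x ≠ y := Finset.notMem_singleton.mp hx
      simp only [Finset.sum_singleton, Finset.prod_singleton, Finset.card_singleton]
      rcases hxy.lt_or_gt with hl | hl
      · nlinarith
      · nlinarith
    · have key := ih hge h3'
      have hsum : 3 * s.card ≤ ∑ x ∈ s, x := by
        calc 3 * s.card = s.card * 3 := by ring
        _ ≤ ∑ x ∈ s, x := Finset.card_nsmul_le_sum s _ 3 h3'
      have hP : 3 ≤ ∏ x ∈ s, x := by nlinarith
      nlinarith

theorem stmt_2 (u : ℕ) (hu : 0 < u) (p n : Fin u → ℕ)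
    (hp : ∀ i, (p i).Prime) (hinj : Function.Injective p)
    (hn : ∀ i, 0 < n i)
    (hmin : ∀ i, p ⟨0, hu⟩ ^ n ⟨0, hu⟩ ≤ p i ^ n i)
    (h : (1 / 2 : ℚ) * (∏ i, (p i : ℚ) ^ (n i)) - 1 <
      ((p ⟨0, hu⟩ : ℚ) ^ (n ⟨0, hu⟩) - 1) / ((p ⟨0, hu⟩ : ℚ) - 1)
        + ∑ i ∈ Finset.univ.erase ⟨0, hu⟩,
            ((p i : ℚ) ^ (n i + 1) - p i) / ((p i : ℚ) - 1)) :
    u ≤ 2 := by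
  by_contra hc
  push_neg at hc
  set z : Fin u := ⟨0, hu⟩ with hz
  set q : Fin u → ℕ := fun i => p i ^ n i with hqdef
  have hq2 : ∀ i, 2 ≤ q i := fun i =>
    Nat.one_lt_pow (hn i).ne' (hp i).one_lt
  have hqinj : Function.Injective q := by
    intro i j hij
    apply hinj
    have h1 : p i ∣ q j := by
      rw [← hij]
      exact dvd_pow_self (p i) (hn i).ne'
    have h2 : p i ∣ p j := (hp i).dvd_of_dvd_pow h1
    exact ((Nat.prime_dvd_prime_iff_eq (hp i) (hp j)).mp h2)
  set T : Finset (Fin u) := Finset.univ.erase z with hT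
  have hcardT : 2 ≤ T.card := by
    rw [hT, Finset.card_erase_of_mem (Finset.mem_univ z), Finset.card_univ,
      Fintype.card_fin]
    omega
  have hq3 : ∀ i ∈ T, 3 ≤ q i := by
    intro i hi
    have hne : q i ≠ q z := fun he => (Finset.mem_erase.mp hi).1 (hqinj he)
    have h1 : q z ≤ q i := hmin i
    have := hq2 z
    omega
  -- natural number key inequality
  have key : 2 * ∑ i ∈ T, q i + 2 ≤ ∏ i ∈ T, q i + 2 * T.card := by
    have himg := claimC (T.image q)
      (by rwa [Finset.card_image_of_injective T hqinj])
      (by intro x hx; obtain ⟨i, hi, rfl⟩ := Finset.mem_image.mp hx; exact hq3 i hi)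
    rwa [Finset.sum_image (fun a _ b _ => fun hab => hqinj hab),
      Finset.prod_image (fun a _ b _ => fun hab => hqinj hab),
      Finset.card_image_of_injective T hqinj] at himg
  -- rational facts
  have hpc : ∀ i, (2:ℚ) ≤ (p i : ℚ) := by
    intro i; exact_mod_cast (hp i).two_le
  have hqc : ∀ i, (p i : ℚ) ^ (n i) = ((q i : ℕ) : ℚ) := by
    intro i; push_cast [hqdef]; ring
  have hqc2 : ∀ i, (2:ℚ) ≤ ((q i : ℕ) : ℚ) := by
    intro i; exact_mod_cast hq2 i
  -- bound on first term
  have bound1 : ((p z : ℚ) ^ (n z) - 1) / ((p z : ℚ) - 1) ≤ ((q z : ℕ) : ℚ) - 1 := by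
    rw [div_le_iff₀ (by linarith [hpc z])]
    rw [hqc z]
    nlinarith [hpc z, hqc2 z]
  -- bound on other terms
  have bound2 : ∀ i ∈ T, ((p i : ℚ) ^ (n i + 1) - p i) / ((p i : ℚ) - 1)
      ≤ 2 * (((q i : ℕ) : ℚ) - 1) := by
    intro i _
    rw [div_le_iff₀ (by linarith [hpc i])]
    rw [pow_succ, hqc i]
    nlinarith [hpc i, hqc2 i, mul_nonneg (by linarith [hpc i] : (0:ℚ) ≤ (p i:ℚ) - 2)
      (by linarith [hqc2 i] : (0:ℚ) ≤ ((q i : ℕ):ℚ) - 1)]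
  have hsum2 : ∑ i ∈ T, ((p i : ℚ) ^ (n i + 1) - p i) / ((p i : ℚ) - 1)
      ≤ ∑ i ∈ T, 2 * (((q i : ℕ) : ℚ) - 1) := Finset.sum_le_sum bound2
  have hsumeq : ∑ i ∈ T, 2 * (((q i : ℕ) : ℚ) - 1)
      = 2 * (∑ i ∈ T, ((q i : ℕ) : ℚ)) - 2 * (T.card : ℚ) := by
    simp [mul_sub, sub_mul, Finset.sum_sub_distrib, Finset.mul_sum, mul_comm]
  -- cast of key
  have keyQ : 2 * (∑ i ∈ T, ((q i : ℕ) : ℚ)) + 2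
      ≤ (∏ i ∈ T, ((q i : ℕ) : ℚ)) + 2 * (T.card : ℚ) := by
    exact_mod_cast key
  have hSnat : 3 * T.card ≤ ∑ i ∈ T, q i := by
    calc 3 * T.card = T.card * 3 := by ring
    _ ≤ ∑ i ∈ T, q i := Finset.card_nsmul_le_sum T _ 3 hq3
  have hPnat : 2 ≤ ∏ i ∈ T, q i := by omega
  have hPQ : (2:ℚ) ≤ ∏ i ∈ T, ((q i : ℕ) : ℚ) := by exact_mod_cast hPnat
  have hprodsplit : ∏ i, ((q i : ℕ) : ℚ)
      = ((q z : ℕ) : ℚ) * ∏ i ∈ T, ((q i : ℕ) : ℚ) :=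
    (Finset.mul_prod_erase _ _ (Finset.mem_univ z)).symm
  have hprodeq : ∏ i, (p i : ℚ) ^ (n i) = ∏ i, ((q i : ℕ) : ℚ) :=
    Finset.prod_congr rfl (fun i _ => hqc i)
  rw [hprodeq, hprodsplit, hqc z] at h
  rw [hqc z] at bound1
  rw [hsumeq] at hsum2
  nlinarith [mul_nonneg (by linarith [hqc2 z] : (0:ℚ) ≤ ((q z : ℕ):ℚ) - 2)
    (by linarith : (0:ℚ) ≤ (∏ i ∈ T, ((q i : ℕ) : ℚ)) - 2), bound1, hsum2, keyQ, h]
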